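/- arXiv:1910.11477 — 2 statements merged into one kernel-verified Lean document; each statement's English description precedes it below -/
import Mathlib

section
/- Let $g_1, g_2$ be jointly Gaussian random variables with mean zero, unit variances, and correlation $\rho \in [-1, 1]$. Then for all $t > 0$, $\mathbb{P}(g_1 g_2 > t) \ge \frac{2}{\pi} \cos^{-1}\left(\frac{\sqrt{3 - \rho}}{2}\right) \exp\left(-\frac{2t}{1 + \rho}\right)$. -/
open MeasureTheory ProbabilityTheory Real Set Filter

lemma aux_gaussian_prod :
    (gaussianReal 0 1).prod (gaussianReal 0 1)
      = (volume : Measure (ℝ × ℝ)).withDensity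
          (fun p => gaussianPDF 0 1 p.1 * gaussianPDF 0 1 p.2) := by
  refine Measure.prod_eq fun s t hs ht => ?_
  rw [withDensity_apply _ (hs.prod ht), Measure.volume_eq_prod, ← Measure.prod_restrict,
    lintegral_prod_mul ((measurable_gaussianPDF 0 1).aemeasurable)
      ((measurable_gaussianPDF 0 1).aemeasurable),
    ← gaussianReal_apply 0 one_ne_zero s, ← gaussianReal_apply 0 one_ne_zero t]

lemma aux_radial (R : ℝ) :
    ∫ r in Ioi R, r * Real.exp (-(r ^ 2 / 2)) = Real.exp (-(R ^ 2 / 2)) := by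
  have key := integral_Ioi_of_hasDerivAt_of_tendsto
    (f := fun r : ℝ => -Real.exp (-(r ^ 2 / 2)))
    (f' := fun r : ℝ => r * Real.exp (-(r ^ 2 / 2))) (a := R) (m := 0)
    (Continuous.continuousWithinAt (by continuity)) ?_ ?_ ?_
  · simpa using key
  · intro x hx
    have : HasDerivAt (fun r : ℝ => -(r ^ 2 / 2)) (-x) x := by
      simpa using ((hasDerivAt_pow 2 x).div_const 2).fun_neg
    simpa [mul_comm] using (this.exp).fun_neg
  · have : Integrable (fun r : ℝ => r * Real.exp (-(1/2) * r ^ 2)) := by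
      simpa using integrable_mul_exp_neg_mul_sq (by norm_num : (0:ℝ) < 1/2)
    refine (this.integrableOn).congr_fun (fun x _ => by ring_nf) measurableSet_Ioi
  · have h0 : Tendsto (fun r : ℝ => r ^ 2 / 2) atTop atTop :=
      (tendsto_pow_atTop two_ne_zero).atTop_div_const (by norm_num)
    have := (Real.tendsto_exp_atBot.comp (tendsto_neg_atTop_atBot.comp h0)).neg
    simpa [Function.comp] using this

lemma aux_angular {c : ℝ} (h0 : 0 ≤ c) (h1 : c < 1) :
    4 * Real.arcsin c
      ≤ (volume (Ioo (-π) π ∩ {θ : ℝ | Real.sin θ ^ 2 ≤ c ^ 2})).toReal := by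
  set α := Real.arcsin c with hα
  have hα0 : 0 ≤ α := Real.arcsin_nonneg.mpr h0
  have hαlt : α < π / 2 := Real.arcsin_lt_pi_div_two.mpr h1
  have hπ : 0 < π := Real.pi_pos
  have hsinmem : ∀ x : ℝ, 0 ≤ x → x ≤ α → Real.sin x ^ 2 ≤ c ^ 2 := by
    intro x hx0 hxα
    have hsx0 : 0 ≤ Real.sin x := Real.sin_nonneg_of_nonneg_of_le_pi hx0 (by linarith)
    have hsx : Real.sin x ≤ c := by
      have := Real.strictMonoOn_sin.monotoneOn
        (mem_Icc.mpr ⟨by linarith, by linarith⟩)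
        (mem_Icc.mpr ⟨by linarith, hαlt.le⟩) hxα
      rwa [Real.sin_arcsin (by linarith) h1.le] at this
    nlinarith
  set U : Set ℝ := Ioc (-π) (-π + α) ∪ Icc (-α) α ∪ Ico (π - α) π with hU
  have hsub : U ⊆ Ioo (-π) π ∩ {θ : ℝ | Real.sin θ ^ 2 ≤ c ^ 2} := by
    rintro θ ((hθ | hθ) | hθ)
    · refine ⟨⟨hθ.1, by linarith [hθ.2]⟩, ?_⟩
      have : Real.sin θ = -Real.sin (θ + π) := by
        rw [Real.sin_add_pi]; ring
      show Real.sin θ ^ 2 ≤ c ^ 2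
      rw [this, neg_sq]
      exact hsinmem (θ + π) (by linarith [hθ.1]) (by linarith [hθ.2])
    · refine ⟨⟨by linarith [hθ.1], by linarith [hθ.2]⟩, ?_⟩
      rcases le_or_gt 0 θ with h | h
      · exact hsinmem θ h hθ.2
      · have : Real.sin θ = -Real.sin (-θ) := by rw [Real.sin_neg]; ring
        show Real.sin θ ^ 2 ≤ c ^ 2
        rw [this, neg_sq]
        exact hsinmem (-θ) (by linarith) (by linarith [hθ.1])
    · refine ⟨⟨by linarith [hθ.1], hθ.2⟩, ?_⟩
      have : Real.sin θ = Real.sin (π - θ) := (Real.sin_pi_sub θ).symm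
      show Real.sin θ ^ 2 ≤ c ^ 2
      rw [this]
      exact hsinmem (π - θ) (by linarith [hθ.2]) (by linarith [hθ.1])
  have hd1 : Disjoint (Ioc (-π) (-π + α)) (Icc (-α) α) := by
    rw [Set.disjoint_left]; intro x hx hx'
    have := hx.2; have := hx'.1; linarith
  have hd2 : Disjoint (Ioc (-π) (-π + α) ∪ Icc (-α) α) (Ico (π - α) π) := by
    rw [Set.disjoint_left]; rintro x (hx | hx) hx' <;>
      [skip; skip] <;> [linarith [hx.2, hx'.1]; linarith [hx.2, hx'.1]]
  have hUvol : volume U = ENNReal.ofReal (4 * α) := by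
    rw [hU, measure_union hd2 measurableSet_Ico,
      measure_union hd1 (measurableSet_Icc),
      Real.volume_Ioc, Real.volume_Icc, Real.volume_Ico,
      ← ENNReal.ofReal_add (by linarith : (0:ℝ) ≤ -π + α - -π) (by linarith : (0:ℝ) ≤ α - -α),
      ← ENNReal.ofReal_add (by linarith : (0:ℝ) ≤ -π + α - -π + (α - -α))
        (by linarith : (0:ℝ) ≤ π - (π - α))]
    congr 1; ring
  have hfin : volume (Ioo (-π) π ∩ {θ : ℝ | Real.sin θ ^ 2 ≤ c ^ 2}) ≠ ⊤ :=
    ((measure_mono inter_subset_left).trans_lt measure_Ioo_lt_top).ne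
  have := measure_mono (μ := volume) hsub
  rw [hUvol] at this
  calc 4 * α = (ENNReal.ofReal (4 * α)).toReal := by
        rw [ENNReal.toReal_ofReal (by positivity)]
    _ ≤ _ := ENNReal.toReal_mono hfin this

lemma aux_pdf_prod (r θ : ℝ) :
    gaussianPDFReal 0 1 (r * Real.cos θ) * gaussianPDFReal 0 1 (r * Real.sin θ)
      = (2 * π)⁻¹ * Real.exp (-(r ^ 2 / 2)) := by
  simp only [gaussianPDFReal, NNReal.coe_one, mul_one, sub_zero]
  rw [show ((Real.sqrt (2 * π))⁻¹ * Real.exp (-(r * Real.cos θ) ^ 2 / 2)) *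
      ((Real.sqrt (2 * π))⁻¹ * Real.exp (-(r * Real.sin θ) ^ 2 / 2))
      = (Real.sqrt (2 * π) * Real.sqrt (2 * π))⁻¹ *
        (Real.exp (-(r * Real.cos θ) ^ 2 / 2) * Real.exp (-(r * Real.sin θ) ^ 2 / 2)) by
    rw [mul_inv]; ring]
  rw [Real.mul_self_sqrt (by positivity), ← Real.exp_add]
  rw [mul_eq_mul_left_iff]
  left
  rw [Real.exp_eq_exp]
  linear_combination (-(r ^ 2) / 2) * Real.cos_sq_add_sin_sq θ

set_option maxHeartbeats 1600000 in
/-- Tail lower bound for the product of two jointly Gaussian variables with zero mean,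
unit variances and correlation `ρ`: for all `t > 0`,
`ℙ(g₁ g₂ > t) ≥ (2/π) arccos(√(3-ρ)/2) exp(-2t/(1+ρ))`.
The jointly Gaussian pair is represented via two independent standard normals `w₁, w₂` as
`g₁ = √((1+ρ)/2) w₁ + √((1-ρ)/2) w₂`, `g₂ = √((1+ρ)/2) w₁ - √((1-ρ)/2) w₂`. -/
theorem stmt6 {Ω : Type*} [MeasurableSpace Ω] (μ : Measure Ω) [IsProbabilityMeasure μ]
    (w₁ w₂ : Ω → ℝ) (hw₁ : Measurable w₁) (hw₂ : Measurable w₂)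
    (hindep : IndepFun w₁ w₂ μ)
    (hg₁ : Measure.map w₁ μ = gaussianReal 0 1)
    (hg₂ : Measure.map w₂ μ = gaussianReal 0 1)
    (ρ : ℝ) (hρ : ρ ∈ Set.Icc (-1 : ℝ) 1)
    (g₁ g₂ : Ω → ℝ)
    (hgdef₁ : g₁ = fun ω => Real.sqrt ((1 + ρ) / 2) * w₁ ω + Real.sqrt ((1 - ρ) / 2) * w₂ ω)
    (hgdef₂ : g₂ = fun ω => Real.sqrt ((1 + ρ) / 2) * w₁ ω - Real.sqrt ((1 - ρ) / 2) * w₂ ω) :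
    ∀ t : ℝ, 0 < t →
      (μ {ω | g₁ ω * g₂ ω > t}).toReal
        ≥ 2 / Real.pi * Real.arccos (Real.sqrt (3 - ρ) / 2)
          * Real.exp (-(2 * t) / (1 + ρ)) := by
  intro t ht
  rcases eq_or_lt_of_le hρ.1 with hρ1 | hρ1
  · -- ρ = -1 : the right-hand side vanishes
    have h4 : Real.sqrt (3 - ρ) = 2 := by
      rw [← hρ1, show (3 : ℝ) - -1 = 2 ^ 2 by norm_num, Real.sqrt_sq (by norm_num)]
    rw [h4, show (2 : ℝ) / 2 = 1 by norm_num, Real.arccos_one]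
    simpa using ENNReal.toReal_nonneg
  -- main case : ρ > -1
  have hρ2 : ρ ≤ 1 := hρ.2
  set a : ℝ := (1 + ρ) / 2 with ha_def
  have ha : 0 < a := by rw [ha_def]; linarith
  have ha1 : a ≤ 1 := by rw [ha_def]; linarith
  set R : ℝ := Real.sqrt (2 * t / a) with hR_def
  have hRpos : 0 < 2 * t / a := by positivity
  set A : Set (ℝ × ℝ) :=
    {p | p.2 ^ 2 ≤ a / 2 * (p.1 ^ 2 + p.2 ^ 2) ∧ 2 * t / a < p.1 ^ 2 + p.2 ^ 2} with hA_def
  have hA : MeasurableSet A := by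
    rw [hA_def, Set.setOf_and]
    exact (measurableSet_le (by fun_prop : Measurable fun p : ℝ × ℝ => p.2 ^ 2)
        (by fun_prop : Measurable fun p : ℝ × ℝ => a / 2 * (p.1 ^ 2 + p.2 ^ 2))).inter
      (measurableSet_lt (by fun_prop : Measurable fun _ : ℝ × ℝ => 2 * t / a)
        (by fun_prop : Measurable fun p : ℝ × ℝ => p.1 ^ 2 + p.2 ^ 2))
  -- the subevent
  have hsub : (fun ω => (w₁ ω, w₂ ω)) ⁻¹' A ⊆ {ω | g₁ ω * g₂ ω > t} := by
    intro ω hω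
    obtain ⟨h1, h2⟩ := hω
    simp only [mem_setOf_eq] at h1 h2 ⊢
    set x := w₁ ω; set y := w₂ ω
    have hprod : g₁ ω * g₂ ω = a * x ^ 2 - (1 - a) * y ^ 2 := by
      rw [hgdef₁, hgdef₂]
      have e1 : Real.sqrt ((1 + ρ) / 2) * Real.sqrt ((1 + ρ) / 2) = a := by
        rw [Real.mul_self_sqrt (by linarith)]
      have e2 : Real.sqrt ((1 - ρ) / 2) * Real.sqrt ((1 - ρ) / 2) = 1 - a := by
        rw [Real.mul_self_sqrt (by linarith)]
        rw [ha_def]; ring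
      nlinarith [e1, e2]
    rw [hprod]
    have key : a * x ^ 2 - (1 - a) * y ^ 2 = a * (x ^ 2 + y ^ 2) - y ^ 2 + (a - a) * y ^ 2 := by
      ring
    have h3 : a / 2 * (x ^ 2 + y ^ 2) > a / 2 * (2 * t / a) :=
      mul_lt_mul_of_pos_left h2 (by linarith)
    have h4 : a / 2 * (2 * t / a) = t := by field_simp
    nlinarith
  -- identify the law of the pair
  have hmapped : μ ((fun ω => (w₁ ω, w₂ ω)) ⁻¹' A)
      = ((gaussianReal 0 1).prod (gaussianReal 0 1)) A := by
    rw [← Measure.map_apply (hw₁.prodMk hw₂) hA,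
      (indepFun_iff_map_prod_eq_prod_map_map hw₁.aemeasurable hw₂.aemeasurable).mp hindep,
      hg₁, hg₂]
  set F : ℝ × ℝ → ℝ := fun p => gaussianPDFReal 0 1 p.1 * gaussianPDFReal 0 1 p.2 with hF_def
  have hFnn : ∀ p, 0 ≤ F p := fun p =>
    mul_nonneg (gaussianPDFReal_nonneg _ _ _) (gaussianPDFReal_nonneg _ _ _)
  -- express the Gaussian measure of A as an integral
  have hνA : (((gaussianReal 0 1).prod (gaussianReal 0 1)) A).toReal
      = ∫ p : ℝ × ℝ, A.indicator F p := by
    have hint : IntegrableOn F A volume := by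
      apply Integrable.integrableOn
      rw [hF_def, Measure.volume_eq_prod]
      exact (integrable_gaussianPDFReal 0 1).mul_prod (integrable_gaussianPDFReal 0 1)
    rw [aux_gaussian_prod, withDensity_apply _ hA,
      show (fun p : ℝ × ℝ => gaussianPDF 0 1 p.1 * gaussianPDF 0 1 p.2)
        = fun p => ENNReal.ofReal (F p) from
        funext fun p => (ENNReal.ofReal_mul (gaussianPDFReal_nonneg 0 1 p.1)).symm,
      ← ofReal_integral_eq_lintegral_ofReal hint (ae_of_all _ hFnn),
      ENNReal.toReal_ofReal (setIntegral_nonneg hA fun p _ => hFnn p),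
      ← integral_indicator hA]
  -- polar coordinates
  set G : ℝ → ℝ := fun r => (Ioi R).indicator
    (fun s => s * ((2 * π)⁻¹ * Real.exp (-(s ^ 2 / 2)))) r with hG_def
  set H : ℝ → ℝ := fun θ =>
    ({θ : ℝ | Real.sin θ ^ 2 ≤ a / 2}).indicator (fun _ => (1 : ℝ)) θ with hH_def
  have hpolar : ∫ p : ℝ × ℝ, A.indicator F p
      = (∫ r in Ioi (0 : ℝ), G r) * ∫ θ in Ioo (-π) π, H θ := by
    rw [← integral_comp_polarCoord_symm (A.indicator F)]
    have htarget : polarCoord.target = Ioi (0 : ℝ) ×ˢ Ioo (-π) π := rfl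
    rw [htarget]
    have hptwise : ∀ p ∈ Ioi (0 : ℝ) ×ˢ Ioo (-π) π,
        p.1 • (A.indicator F (polarCoord.symm p)) = G p.1 * H p.2 := by
      rintro ⟨r, θ⟩ ⟨hr, hθ⟩
      have hr : (0 : ℝ) < r := hr
      have hsymm : polarCoord.symm (r, θ) = (r * Real.cos θ, r * Real.sin θ) := rfl
      have hsum : (r * Real.cos θ) ^ 2 + (r * Real.sin θ) ^ 2 = r ^ 2 := by
        have := Real.cos_sq_add_sin_sq θ; nlinarith
      have hmem : (r * Real.cos θ, r * Real.sin θ) ∈ A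
          ↔ (Real.sin θ ^ 2 ≤ a / 2 ∧ R < r) := by
        rw [hA_def]
        simp only [mem_setOf_eq, hsum]
        constructor
        · rintro ⟨h1, h2⟩
          refine ⟨?_, ?_⟩
          · nlinarith [sq_nonneg (Real.sin θ), mul_pos hr hr]
          · rw [hR_def]; exact (Real.sqrt_lt' hr).mpr h2
        · rintro ⟨h1, h2⟩
          refine ⟨by nlinarith [mul_pos hr hr], ?_⟩
          rw [hR_def] at h2; exact (Real.sqrt_lt' hr).mp h2
      rw [hsymm]
      by_cases hc : Real.sin θ ^ 2 ≤ a / 2 <;> by_cases hd : R < r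
      · rw [Set.indicator_of_mem (hmem.mpr ⟨hc, hd⟩), hF_def]
        show r * (gaussianPDFReal 0 1 (r * Real.cos θ) * gaussianPDFReal 0 1 (r * Real.sin θ))
          = G r * H θ
        rw [aux_pdf_prod, hG_def, hH_def]
        simp only [Set.indicator_of_mem (mem_Ioi.mpr hd),
          Set.indicator_of_mem (mem_setOf_eq ▸ hc : θ ∈ {θ : ℝ | Real.sin θ ^ 2 ≤ a / 2})]
        ring
      · rw [Set.indicator_of_notMem (fun h => hd (hmem.mp h).2), hG_def]
        simp [Set.indicator_of_notMem (fun h : r ∈ Ioi R => hd h)]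
      · rw [Set.indicator_of_notMem (fun h => hc (hmem.mp h).1), hH_def]
        simp [Set.indicator_of_notMem (fun h : θ ∈ {θ : ℝ | Real.sin θ ^ 2 ≤ a / 2} => hc h)]
      · rw [Set.indicator_of_notMem (fun h => hd (hmem.mp h).2), hG_def]
        simp [Set.indicator_of_notMem (fun h : r ∈ Ioi R => hd h)]
    rw [setIntegral_congr_fun (measurableSet_Ioi.prod measurableSet_Ioo) hptwise,
      Measure.volume_eq_prod, setIntegral_prod_mul]
  -- radial integral
  have hradial : ∫ r in Ioi (0 : ℝ), G r = (2 * π)⁻¹ * Real.exp (-(2 * t) / (1 + ρ)) := by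
    rw [hG_def, setIntegral_indicator measurableSet_Ioi, Set.Ioi_inter_Ioi,
      sup_eq_right.mpr (Real.sqrt_nonneg _)]
    rw [show (fun s : ℝ => s * ((2 * π)⁻¹ * Real.exp (-(s ^ 2 / 2))))
        = fun s : ℝ => (2 * π)⁻¹ * (s * Real.exp (-(s ^ 2 / 2))) from funext fun s => by ring]
    rw [integral_const_mul, aux_radial, Real.sq_sqrt hRpos.le]
    congr 1
    rw [ha_def]
    rw [div_div, neg_div]
    rw [show 2 * t / ((1 + ρ) / 2 * 2) = 2 * t / (1 + ρ) by congr 1; ring]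
  -- angular integral
  have hangular : 2 / π * Real.arccos (Real.sqrt (3 - ρ) / 2)
      ≤ (2 * π)⁻¹ * ∫ θ in Ioo (-π) π, H θ := by
    set c : ℝ := Real.sqrt (a / 2) with hc_def
    have hc0 : 0 ≤ c := Real.sqrt_nonneg _
    have hc1 : c < 1 := by
      rw [hc_def]
      rw [show (1 : ℝ) = Real.sqrt 1 by rw [Real.sqrt_one]]
      exact Real.sqrt_lt_sqrt (by positivity) (by linarith)
    have hcsq : c ^ 2 = a / 2 := Real.sq_sqrt (by positivity)
    have harccos : Real.arccos (Real.sqrt (3 - ρ) / 2) = Real.arcsin c := by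
      rw [Real.arccos_eq_arcsin (by positivity)]
      congr 1
      rw [div_pow, Real.sq_sqrt (by linarith : (0:ℝ) ≤ 3 - ρ), hc_def]
      congr 1
      rw [ha_def]; ring
    have hHval : ∫ θ in Ioo (-π) π, H θ
        = (volume (Ioo (-π) π ∩ {θ : ℝ | Real.sin θ ^ 2 ≤ a / 2})).toReal := by
      rw [hH_def, setIntegral_indicator
        (measurableSet_le (Real.measurable_sin.pow_const 2) measurable_const),
        setIntegral_const, smul_eq_mul, mul_one]
      rfl
    have hang := aux_angular hc0 hc1
    rw [hcsq] at hang
    rw [harccos, hHval]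
    have hπ : 0 < π := Real.pi_pos
    calc 2 / π * Real.arcsin c = (2 * π)⁻¹ * (4 * Real.arcsin c) := by
          field_simp; ring
      _ ≤ _ := mul_le_mul_of_nonneg_left hang (by positivity)
  -- put everything together
  have hmeas_le : ((gaussianReal 0 1).prod (gaussianReal 0 1)) A ≤ μ {ω | g₁ ω * g₂ ω > t} := by
    rw [← hmapped]
    exact measure_mono hsub
  have hfinal : (((gaussianReal 0 1).prod (gaussianReal 0 1)) A).toReal
      ≥ 2 / Real.pi * Real.arccos (Real.sqrt (3 - ρ) / 2) * Real.exp (-(2 * t) / (1 + ρ)) := by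
    rw [hνA, hpolar, hradial]
    have hexp : 0 ≤ Real.exp (-(2 * t) / (1 + ρ)) := (Real.exp_pos _).le
    calc 2 / Real.pi * Real.arccos (Real.sqrt (3 - ρ) / 2) * Real.exp (-(2 * t) / (1 + ρ))
        ≤ (2 * π)⁻¹ * (∫ θ in Ioo (-π) π, H θ) * Real.exp (-(2 * t) / (1 + ρ)) :=
          mul_le_mul_of_nonneg_right hangular hexp
      _ = (2 * π)⁻¹ * Real.exp (-(2 * t) / (1 + ρ)) * ∫ θ in Ioo (-π) π, H θ := by ring
  exact le_trans hfinal (ENNReal.toReal_mono (measure_ne_top μ _) hmeas_le)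
end

section
/- Let $X_\sharp \in \mathbb{R}^{d_1 \times d_2}$ have rank $r$ with compact SVD $X_\sharp = U_\sharp \Sigma_\sharp V_\sharp^\top$, and let $\hat V \in \mathbb{R}^{d_2 \times r}$ satisfy $\hat V^\top \hat V = I_r$ and $\|(I_{d_2} - \hat V \hat V^\top) V_\sharp V_\sharp^\top\| \le \delta$ for some $\delta < 1$ (spectral norm). Then the $r$-th largest singular value satisfies $\sigma_r(X_\sharp \hat V \hat V^\top X_\sharp^\top) \ge (1 - \delta)\,\sigma_r(X_\sharp)^2$; in particular $X_\sharp \hat V \hat V^\top X_\sharp^\top$ has rank exactly $r$ and its column space equals that of $U_\sharp$. -/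
/-- The spectral (ℓ₂ operator) norm of a real matrix. -/
noncomputable def specNorm {m n : ℕ} (A : Matrix (Fin m) (Fin n) ℝ) : ℝ :=
  ‖(Matrix.toEuclideanLin A).toContinuousLinearMap‖

/-- The `k`-th largest singular value of a real matrix, via the Courant–Fischer
max-min characterization: `σ_k(A) = sup_{dim S = k} inf_{x ∈ S, ‖x‖=1} ‖A x‖`. -/
noncomputable def singVal {m n : ℕ} (A : Matrix (Fin m) (Fin n) ℝ) (k : ℕ) : ℝ :=
  ⨆ S : {S : Submodule ℝ (EuclideanSpace ℝ (Fin n)) // Module.finrank ℝ S = k},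
    ⨅ x : {x : EuclideanSpace ℝ (Fin n) // x ∈ S.1 ∧ ‖x‖ = 1},
      ‖Matrix.toEuclideanLin A x.1‖

namespace Stmt12Aux

open Matrix
open scoped RealInnerProductSpace

variable {m n p q : ℕ}

lemma real_iInf_empty {ι : Sort*} [IsEmpty ι] (f : ι → ℝ) : ⨅ i, f i = 0 := by
  rw [iInf, Set.range_eq_empty, Real.sInf_empty]

lemma specNorm_nonneg (A : Matrix (Fin m) (Fin n) ℝ) : 0 ≤ specNorm A := norm_nonneg _

lemma tel_mul (M : Matrix (Fin m) (Fin n) ℝ) (N : Matrix (Fin n) (Fin p) ℝ)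
    (x : EuclideanSpace ℝ (Fin p)) :
    Matrix.toEuclideanLin (M * N) x = Matrix.toEuclideanLin M (Matrix.toEuclideanLin N x) := by
  simp [Matrix.toEuclideanLin_apply, Matrix.mulVec_mulVec]

lemma inner_tel (M : Matrix (Fin m) (Fin n) ℝ) (x : EuclideanSpace ℝ (Fin n))
    (y : EuclideanSpace ℝ (Fin m)) :
    ⟪Matrix.toEuclideanLin M x, y⟫ = ⟪x, Matrix.toEuclideanLin M.transpose y⟫ := by
  simp only [Matrix.toEuclideanLin_apply, PiLp.inner_apply, RCLike.inner_apply, conj_trivial]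
  change (WithLp.ofLp y) ⬝ᵥ (M *ᵥ WithLp.ofLp x)
      = (M.transpose *ᵥ WithLp.ofLp y) ⬝ᵥ (WithLp.ofLp x)
  rw [Matrix.mulVec_transpose, Matrix.dotProduct_mulVec]

lemma tel_one (x : EuclideanSpace ℝ (Fin n)) :
    Matrix.toEuclideanLin (1 : Matrix (Fin n) (Fin n) ℝ) x = x := by
  simp [Matrix.toEuclideanLin_apply]

lemma tel_norm_le (M : Matrix (Fin m) (Fin n) ℝ) (x : EuclideanSpace ℝ (Fin n)) :
    ‖Matrix.toEuclideanLin M x‖ ≤ specNorm M * ‖x‖ :=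
  (Matrix.toEuclideanLin M).toContinuousLinearMap.le_opNorm x

lemma tel_norm_eq (W : Matrix (Fin n) (Fin p) ℝ) (hW : W.transpose * W = 1)
    (c : EuclideanSpace ℝ (Fin p)) :
    ‖Matrix.toEuclideanLin W c‖ = ‖c‖ := by
  have h : ⟪Matrix.toEuclideanLin W c, Matrix.toEuclideanLin W c⟫ = ⟪c, c⟫ := by
    rw [inner_tel, ← tel_mul, hW, tel_one]
  rw [real_inner_self_eq_norm_sq, real_inner_self_eq_norm_sq] at h
  have := congrArg Real.sqrt h
  rwa [Real.sqrt_sq (norm_nonneg _), Real.sqrt_sq (norm_nonneg _)] at this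

lemma tel_inj (W : Matrix (Fin n) (Fin p) ℝ) (hW : W.transpose * W = 1) :
    Function.Injective (Matrix.toEuclideanLin W) := by
  intro a b hab
  have h : ‖Matrix.toEuclideanLin W (a - b)‖ = ‖a - b‖ := tel_norm_eq W hW _
  rw [map_sub, hab, sub_self, norm_zero] at h
  have := (norm_eq_zero.mp h.symm)
  exact sub_eq_zero.mp this

/-- The key estimate: `‖V̂ᵀ (V c)‖² ≥ (1-δ) ‖c‖²`. -/
lemma key_lemma {d₂ r : ℕ} (V Vh : Matrix (Fin d₂) (Fin r) ℝ)
    (hVc : V.transpose * V = 1) (hVh : Vh.transpose * Vh = 1) (δ : ℝ) (hδ : δ < 1)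
    (hclose : specNorm ((1 - Vh * Vh.transpose) * (V * V.transpose)) ≤ δ)
    (c : EuclideanSpace ℝ (Fin r)) :
    (1 - δ) * ‖c‖ ^ 2 ≤ ‖Matrix.toEuclideanLin Vh.transpose (Matrix.toEuclideanLin V c)‖ ^ 2 := by
  have hδ0 : 0 ≤ δ := (specNorm_nonneg _).trans hclose
  set y := Matrix.toEuclideanLin V c with hy
  have hyc : ‖y‖ = ‖c‖ := tel_norm_eq V hVc c
  have hVVV : (V * V.transpose) * V = V := by rw [Matrix.mul_assoc, hVc, Matrix.mul_one]
  have hyfix : Matrix.toEuclideanLin (V * V.transpose) y = y := by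
    rw [hy, ← tel_mul, hVVV]
  set z := Matrix.toEuclideanLin Vh.transpose y with hz
  set u := Matrix.toEuclideanLin Vh z with hu
  have huz : ‖u‖ = ‖z‖ := tel_norm_eq Vh hVh z
  have h1 : Matrix.toEuclideanLin ((1 : Matrix (Fin d₂) (Fin d₂) ℝ) - Vh * Vh.transpose) y
      = y - u := by
    rw [map_sub, LinearMap.sub_apply, tel_one, tel_mul, hu, hz]
  have hw : y - u = Matrix.toEuclideanLin ((1 - Vh * Vh.transpose) * (V * V.transpose)) y := by
    rw [tel_mul, hyfix, h1]
  have hwnorm : ‖y - u‖ ≤ δ * ‖y‖ := by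
    rw [hw]
    exact (tel_norm_le _ _).trans (mul_le_mul_of_nonneg_right hclose (norm_nonneg y))
  have horth : ⟪u, y - u⟫ = 0 := by
    rw [inner_sub_right]
    have h2 : ⟪u, y⟫ = ⟪z, z⟫ := by
      rw [hu, inner_tel, ← hz]
    have h3 : ⟪u, u⟫ = ⟪z, z⟫ := by
      rw [real_inner_self_eq_norm_sq, real_inner_self_eq_norm_sq, huz]
    rw [h2, h3, sub_self]
  have hdecomp : ‖y‖ ^ 2 = ‖u‖ ^ 2 + ‖y - u‖ ^ 2 := by
    have : y = u + (y - u) := by abel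
    calc ‖y‖ ^ 2 = ‖u + (y - u)‖ ^ 2 := by rw [← this]
      _ = ‖u‖ ^ 2 + 2 * ⟪u, y - u⟫ + ‖y - u‖ ^ 2 := norm_add_sq_real u (y - u)
      _ = ‖u‖ ^ 2 + ‖y - u‖ ^ 2 := by rw [horth]; ring
  have hw2 : ‖y - u‖ ^ 2 ≤ δ ^ 2 * ‖y‖ ^ 2 := by
    nlinarith [norm_nonneg (y - u), norm_nonneg y]
  have hd : 0 ≤ δ * (1 - δ) * ‖c‖ ^ 2 :=
    mul_nonneg (mul_nonneg hδ0 (by linarith)) (sq_nonneg _)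
  have hyc2 : ‖y‖ ^ 2 = ‖c‖ ^ 2 := by rw [hyc]
  have huz2 : ‖u‖ ^ 2 = ‖z‖ ^ 2 := by rw [huz]
  nlinarith [hdecomp, hw2, hyc2, huz2, hd]

lemma singVal_zero (A : Matrix (Fin m) (Fin n) ℝ) : singVal A 0 = 0 := by
  have hkey : ∀ S : {S : Submodule ℝ (EuclideanSpace ℝ (Fin n)) // Module.finrank ℝ S = 0},
      (⨅ x : {x : EuclideanSpace ℝ (Fin n) // x ∈ S.1 ∧ ‖x‖ = 1},
        ‖Matrix.toEuclideanLin A x.1‖) = 0 := by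
    intro S
    have hbot : S.1 = ⊥ := Submodule.finrank_eq_zero.mp S.2
    have : IsEmpty {x : EuclideanSpace ℝ (Fin n) // x ∈ S.1 ∧ ‖x‖ = 1} := by
      constructor
      rintro ⟨x, hx, hn⟩
      rw [hbot, Submodule.mem_bot] at hx
      rw [hx, norm_zero] at hn
      exact one_ne_zero hn.symm
    exact real_iInf_empty _
  have hne : Nonempty {S : Submodule ℝ (EuclideanSpace ℝ (Fin n)) // Module.finrank ℝ S = 0} :=
    ⟨⟨⊥, finrank_bot ℝ _⟩⟩
  rw [singVal]
  calc (⨆ S : {S : Submodule ℝ (EuclideanSpace ℝ (Fin n)) // Module.finrank ℝ S = 0},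
        ⨅ x : {x : EuclideanSpace ℝ (Fin n) // x ∈ S.1 ∧ ‖x‖ = 1},
          ‖Matrix.toEuclideanLin A x.1‖)
      = ⨆ _ : {S : Submodule ℝ (EuclideanSpace ℝ (Fin n)) // Module.finrank ℝ S = 0}, (0:ℝ) := by
        exact iSup_congr hkey
    _ = 0 := ciSup_const

end Stmt12Aux

open Stmt12Aux Matrix
open scoped RealInnerProductSpace

set_option maxHeartbeats 1000000 in
/-- If `X♯ = U♯ Σ♯ V♯ᵀ` is a compact SVD of a rank-`r` matrix and `V̂` has orthonormal
columns with `‖(I - V̂V̂ᵀ) V♯V♯ᵀ‖ ≤ δ < 1`, then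
`σ_r(X♯ V̂ V̂ᵀ X♯ᵀ) ≥ (1-δ) σ_r(X♯)²`; in particular `X♯ V̂ V̂ᵀ X♯ᵀ` has rank exactly `r`
and its column space equals that of `U♯`. -/
theorem stmt12 (d₁ d₂ r : ℕ)
    (X : Matrix (Fin d₁) (Fin d₂) ℝ)
    (U : Matrix (Fin d₁) (Fin r) ℝ) (s : Fin r → ℝ) (V : Matrix (Fin d₂) (Fin r) ℝ)
    (hX : X = U * Matrix.diagonal s * V.transpose)
    (hU : U.transpose * U = 1) (hVc : V.transpose * V = 1)
    (hs : ∀ k, 0 < s k)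
    (Vh : Matrix (Fin d₂) (Fin r) ℝ) (hVh : Vh.transpose * Vh = 1)
    (δ : ℝ) (hδ : δ < 1)
    (hclose : specNorm (((1 - Vh * Vh.transpose) * (V * V.transpose) :
      Matrix (Fin d₂) (Fin d₂) ℝ)) ≤ δ) :
    singVal (X * Vh * Vh.transpose * X.transpose) r ≥ (1 - δ) * singVal X r ^ 2 ∧
    (X * Vh * Vh.transpose * X.transpose).rank = r ∧
    LinearMap.range (Matrix.toLin' (X * Vh * Vh.transpose * X.transpose))
      = LinearMap.range (Matrix.toLin' U) := by
  classical
  set A := X * Vh * Vh.transpose * X.transpose with hA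
  rcases Nat.eq_zero_or_pos r with hr | hr
  · subst hr
    have hX0 : X = 0 := by
      ext i k
      rw [hX]
      simp [Matrix.mul_apply]
    have hA0 : A = 0 := by rw [hA, hX0]; simp
    have hU0 : Matrix.toLin' U = 0 := by
      apply LinearMap.ext
      intro c
      have : c = 0 := Subsingleton.elim c 0
      simp [this]
    refine ⟨?_, ?_, ?_⟩
    · rw [singVal_zero, singVal_zero]; simp
    · rw [hA0, Matrix.rank]
      simp [Matrix.mulVecLin_zero]
    · rw [hA0, hU0]
      simp
  -- main case r > 0
  have hδ0 : 0 ≤ δ := (specNorm_nonneg _).trans hclose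
  have : Nonempty (Fin r) := ⟨⟨0, hr⟩⟩
  obtain ⟨j, hj⟩ := Finite.exists_min s
  -- transpose of X
  have hXT : X.transpose = V * (Matrix.diagonal s * U.transpose) := by
    rw [hX]
    simp [Matrix.transpose_mul, Matrix.diagonal_transpose, Matrix.mul_assoc]
  -- norm-squared computations
  have hnorm_sq : ∀ (k : ℕ) (v : EuclideanSpace ℝ (Fin k)), ‖v‖ ^ 2 = ∑ i, v i ^ 2 := by
    intro k v
    rw [← real_inner_self_eq_norm_sq, PiLp.inner_apply]
    simp [RCLike.inner_apply, sq]
  have hdiag_apply : ∀ (c : EuclideanSpace ℝ (Fin r)) (i : Fin r),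
      (Matrix.toEuclideanLin (Matrix.diagonal s) c) i = s i * c i := by
    intro c i
    exact Matrix.mulVec_diagonal s _ i
  -- Part 1a : singVal X r ≤ s j
  have hXle : singVal X r ≤ s j := by
    apply Real.iSup_le _ (hs j).le
    rintro ⟨S, hS⟩
    -- the span of the other columns of V
    set colV : Fin r → EuclideanSpace ℝ (Fin d₂) :=
      fun i => Matrix.toEuclideanLin V (EuclideanSpace.single i 1) with hcolV
    set K : Submodule ℝ (EuclideanSpace ℝ (Fin d₂)) :=
      Submodule.span ℝ (Set.range (fun i : {i : Fin r // i ≠ j} => colV i.1)) with hK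
    have hKcard : Module.finrank ℝ K ≤ r - 1 := by
      refine le_trans (finrank_span_le_card _) ?_
      rw [Set.toFinset_range]
      refine le_trans (Finset.card_image_le) ?_
      simp [Fintype.card_subtype_compl]
    have hKorth : d₂ - (r - 1) ≤ Module.finrank ℝ Kᗮ := by
      have h := Submodule.finrank_add_finrank_orthogonal K
      rw [finrank_euclideanSpace_fin] at h
      omega
    have hdim : 0 < Module.finrank ℝ ↥(S ⊓ Kᗮ) := by
      have h1 := Submodule.finrank_sup_add_finrank_inf_eq S Kᗮ
      have h2 : Module.finrank ℝ ↥(S ⊔ Kᗮ) ≤ d₂ := by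
        simpa [finrank_euclideanSpace_fin] using Submodule.finrank_le (S ⊔ Kᗮ)
      have hrd : r ≤ d₂ := by
        have hVinj := tel_inj V hVc
        have := LinearMap.finrank_range_of_inj hVinj
        rw [finrank_euclideanSpace_fin] at this
        calc r = Module.finrank ℝ (LinearMap.range (Matrix.toEuclideanLin V)) := this.symm
          _ ≤ d₂ := by
            simpa [finrank_euclideanSpace_fin] using
              Submodule.finrank_le (LinearMap.range (Matrix.toEuclideanLin V))
      omega
    haveI : Nontrivial ↥(S ⊓ Kᗮ) := Module.finrank_pos_iff.mp hdim
    obtain ⟨⟨x₀, hx₀m⟩, hx₀ne⟩ := exists_ne (0 : ↥(S ⊓ Kᗮ))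
    have hx₀ : x₀ ≠ 0 := by
      intro h
      exact hx₀ne (Subtype.ext h)
    set x := (‖x₀‖⁻¹ : ℝ) • x₀ with hx
    have hxS : x ∈ S := Submodule.smul_mem _ _ (hx₀m.1)
    have hxK : x ∈ Kᗮ := Submodule.smul_mem _ _ (hx₀m.2)
    have hxn : ‖x‖ = 1 := norm_smul_inv_norm hx₀
    have hbdd : BddBelow (Set.range fun x : {x : EuclideanSpace ℝ (Fin d₂) // x ∈ S ∧ ‖x‖ = 1} =>
        ‖Matrix.toEuclideanLin X x.1‖) := by
      refine ⟨0, ?_⟩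
      rintro _ ⟨y, rfl⟩
      exact norm_nonneg _
    refine le_trans (ciInf_le hbdd ⟨x, hxS, hxn⟩) ?_
    -- bound ‖X x‖ ≤ s j
    set w : EuclideanSpace ℝ (Fin r) := Matrix.toEuclideanLin V.transpose x with hwdef
    have hwz : ∀ i : Fin r, i ≠ j → w i = 0 := by
      intro i hi
      have hmem : colV i ∈ K := Submodule.subset_span ⟨⟨i, hi⟩, rfl⟩
      have := (Submodule.mem_orthogonal K x).mp hxK _ hmem
      rw [hcolV] at this
      rw [inner_tel, EuclideanSpace.inner_single_left] at this
      simpa [hwdef] using this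
    have hwj : |w j| ≤ 1 := by
      have h1 : w j = ⟪colV j, x⟫ := by
        rw [hcolV, inner_tel, EuclideanSpace.inner_single_left]
        simp [hwdef]
      have h2 : ‖colV j‖ = 1 := by
        rw [hcolV, tel_norm_eq V hVc, EuclideanSpace.norm_single]
        norm_num
      rw [h1]
      calc |⟪colV j, x⟫| ≤ ‖colV j‖ * ‖x‖ := abs_real_inner_le_norm _ _
        _ = 1 := by rw [h2, hxn, one_mul]
    have hXx : Matrix.toEuclideanLin X x
        = Matrix.toEuclideanLin U (Matrix.toEuclideanLin (Matrix.diagonal s) w) := by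
      rw [hX, tel_mul, tel_mul, hwdef]
    have hDw : ‖Matrix.toEuclideanLin (Matrix.diagonal s) w‖ ^ 2 = (s j * w j) ^ 2 := by
      rw [hnorm_sq]
      rw [Finset.sum_eq_single j]
      · rw [hdiag_apply]
      · intro i _ hi
        rw [hdiag_apply, hwz i hi, mul_zero]
        norm_num
      · intro h
        exact absurd (Finset.mem_univ j) h
    have hnX : ‖Matrix.toEuclideanLin X x‖ = |s j * w j| := by
      rw [hXx, tel_norm_eq U hU]
      have h := congrArg Real.sqrt hDw
      rwa [Real.sqrt_sq (norm_nonneg _), Real.sqrt_sq_eq_abs] at h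
    rw [hnX, abs_mul, abs_of_pos (hs j)]
    calc s j * |w j| ≤ s j * 1 := mul_le_mul_of_nonneg_left hwj (hs j).le
      _ = s j := mul_one _
  -- nonnegativity of singVal X r
  have hXnn : 0 ≤ singVal X r := by
    apply Real.iSup_nonneg
    intro S
    apply Real.iInf_nonneg
    intro x
    exact norm_nonneg _
  -- Part 1b : singVal A r ≥ (1 - δ) * (s j)^2
  have hAge : (1 - δ) * s j ^ 2 ≤ singVal A r := by
    have hUinj := tel_inj U hU
    have hS₀rank : Module.finrank ℝ (LinearMap.range (Matrix.toEuclideanLin U)) = r := by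
      rw [LinearMap.finrank_range_of_inj hUinj, finrank_euclideanSpace_fin]
    have hx_bound : ∀ x : EuclideanSpace ℝ (Fin d₁),
        x ∈ LinearMap.range (Matrix.toEuclideanLin U) → ‖x‖ = 1 →
        (1 - δ) * s j ^ 2 ≤ ‖Matrix.toEuclideanLin A x‖ := by
      intro x hxS hxn
      obtain ⟨c, hc⟩ := hxS
      have hcn : ‖c‖ = 1 := by
        rw [← tel_norm_eq U hU c, hc, hxn]
      have hinner : ⟪x, Matrix.toEuclideanLin A x⟫
          = ‖Matrix.toEuclideanLin Vh.transpose (Matrix.toEuclideanLin X.transpose x)‖ ^ 2 := by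
        rw [hA, tel_mul, tel_mul, tel_mul, real_inner_comm, inner_tel, inner_tel,
          real_inner_self_eq_norm_sq]
      have hy2 : Matrix.toEuclideanLin X.transpose x
          = Matrix.toEuclideanLin V (Matrix.toEuclideanLin (Matrix.diagonal s) c) := by
        rw [← hc, hXT, tel_mul, tel_mul, ← tel_mul U.transpose U c, hU, tel_one]
      have hkey := key_lemma V Vh hVc hVh δ hδ hclose (Matrix.toEuclideanLin (Matrix.diagonal s) c)
      have hDc : s j ^ 2 ≤ ‖Matrix.toEuclideanLin (Matrix.diagonal s) c‖ ^ 2 := by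
        calc s j ^ 2 = s j ^ 2 * ‖c‖ ^ 2 := by rw [hcn]; ring
          _ = ∑ i, s j ^ 2 * c i ^ 2 := by rw [hnorm_sq, Finset.mul_sum]
          _ ≤ ∑ i, (s i * c i) ^ 2 := by
              refine Finset.sum_le_sum fun i _ => ?_
              have hf : (0:ℝ) ≤ (s i - s j) * (s i + s j) * c i ^ 2 :=
                mul_nonneg (mul_nonneg (sub_nonneg.mpr (hj i))
                  (by nlinarith [hs i, hs j])) (sq_nonneg (c i))
              nlinarith [hf]
          _ = ‖Matrix.toEuclideanLin (Matrix.diagonal s) c‖ ^ 2 := by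
              rw [hnorm_sq]
              exact Finset.sum_congr rfl fun i _ => by rw [hdiag_apply]
      have hfin : (1 - δ) * s j ^ 2 ≤ ⟪x, Matrix.toEuclideanLin A x⟫ := by
        rw [hinner, hy2]
        calc (1 - δ) * s j ^ 2
            ≤ (1 - δ) * ‖Matrix.toEuclideanLin (Matrix.diagonal s) c‖ ^ 2 :=
              mul_le_mul_of_nonneg_left hDc (by linarith)
          _ ≤ _ := hkey
      calc (1 - δ) * s j ^ 2 ≤ ⟪x, Matrix.toEuclideanLin A x⟫ := hfin
        _ ≤ ‖x‖ * ‖Matrix.toEuclideanLin A x‖ := real_inner_le_norm _ _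
        _ = ‖Matrix.toEuclideanLin A x‖ := by rw [hxn, one_mul]
    have hbddA : BddAbove (Set.range fun S : {S : Submodule ℝ (EuclideanSpace ℝ (Fin d₁)) //
        Module.finrank ℝ S = r} =>
        ⨅ x : {x : EuclideanSpace ℝ (Fin d₁) // x ∈ S.1 ∧ ‖x‖ = 1},
          ‖Matrix.toEuclideanLin A x.1‖) := by
      refine ⟨specNorm A, ?_⟩
      rintro _ ⟨S, rfl⟩
      by_cases h : Nonempty {x : EuclideanSpace ℝ (Fin d₁) // x ∈ S.1 ∧ ‖x‖ = 1}
      · obtain ⟨⟨x, hxS, hxn⟩⟩ := h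
        refine le_trans (ciInf_le ⟨0, ?_⟩ ⟨x, hxS, hxn⟩) ?_
        · rintro _ ⟨y, rfl⟩; exact norm_nonneg _
        · have := tel_norm_le A x
          rwa [hxn, mul_one] at this
      · rw [not_nonempty_iff] at h
        exact le_trans (le_of_eq (real_iInf_empty _)) (specNorm_nonneg A)
    have hne : Nonempty {x : EuclideanSpace ℝ (Fin d₁) //
        x ∈ LinearMap.range (Matrix.toEuclideanLin U) ∧ ‖x‖ = 1} := by
      refine ⟨⟨Matrix.toEuclideanLin U (EuclideanSpace.single j 1), ⟨_, rfl⟩, ?_⟩⟩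
      rw [tel_norm_eq U hU, EuclideanSpace.norm_single]
      norm_num
    refine le_trans ?_ (le_ciSup hbddA ⟨LinearMap.range (Matrix.toEuclideanLin U), hS₀rank⟩)
    exact le_ciInf fun x => hx_bound x.1 x.2.1 x.2.2
  -- rank and range
  have hNT : (Matrix.diagonal s * (V.transpose * Vh)).transpose
      = (Vh.transpose * V) * Matrix.diagonal s := by
    rw [Matrix.transpose_mul, Matrix.transpose_mul, Matrix.transpose_transpose,
      Matrix.diagonal_transpose, Matrix.mul_assoc]
  set N : Matrix (Fin r) (Fin r) ℝ := Matrix.diagonal s * (V.transpose * Vh) with hN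
  set MM : Matrix (Fin r) (Fin r) ℝ := N * N.transpose with hMM
  have hAU : A = U * MM * U.transpose := by
    rw [hA, hX, hMM, hN, hNT]
    simp [Matrix.transpose_mul, Matrix.diagonal_transpose, Matrix.mul_assoc]
  have hMMinj : ∀ c : EuclideanSpace ℝ (Fin r), Matrix.toEuclideanLin MM c = 0 → c = 0 := by
    intro c hc0
    have h1 : ⟪Matrix.toEuclideanLin N (Matrix.toEuclideanLin N.transpose c), c⟫ = 0 := by
      rw [← tel_mul, ← hMM, hc0, inner_zero_left]
    rw [inner_tel] at h1
    have h2 : Matrix.toEuclideanLin N.transpose c = 0 := inner_self_eq_zero.mp h1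
    have h3 : Matrix.toEuclideanLin N.transpose c
        = Matrix.toEuclideanLin Vh.transpose
            (Matrix.toEuclideanLin V (Matrix.toEuclideanLin (Matrix.diagonal s) c)) := by
      rw [hN, hNT, tel_mul, tel_mul]
    have h4 := key_lemma V Vh hVc hVh δ hδ hclose (Matrix.toEuclideanLin (Matrix.diagonal s) c)
    rw [← h3, h2, norm_zero] at h4
    have h6 : ‖Matrix.toEuclideanLin (Matrix.diagonal s) c‖ ^ 2 = 0 :=
      le_antisymm (by nlinarith) (sq_nonneg _)
    have h7 : Matrix.toEuclideanLin (Matrix.diagonal s) c = 0 :=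
      norm_eq_zero.mp ((pow_eq_zero_iff two_ne_zero).mp h6)
    ext i
    have h8 : s i * c i = 0 := by
      rw [← hdiag_apply c i, h7]
      rfl
    exact (mul_eq_zero.mp h8).resolve_left (ne_of_gt (hs i))
  have hMMinj' : Function.Injective MM.mulVec := by
    intro a b hab
    have h : MM *ᵥ (a - b) = 0 := by rw [Matrix.mulVec_sub, hab, sub_self]
    have h2 : Matrix.toEuclideanLin MM ((WithLp.equiv 2 (Fin r → ℝ)).symm (a - b)) = 0 := by
      rw [WithLp.equiv_symm_apply, Matrix.toEuclideanLin_apply_piLp_toLp, h]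
      rfl
    have h3 := hMMinj _ h2
    have h4 : a - b = 0 := congrArg (WithLp.equiv 2 (Fin r → ℝ)) h3
    exact sub_eq_zero.mp h4
  have hMMunit : IsUnit MM := Matrix.mulVec_injective_iff_isUnit.mp hMMinj'
  have hdet : IsUnit MM.det := (Matrix.isUnit_iff_isUnit_det MM).mp hMMunit
  have hMMinv : MM * MM⁻¹ = 1 := Matrix.mul_nonsing_inv MM hdet
  have hAU1 : A = U * (MM * U.transpose) := by rw [hAU, Matrix.mul_assoc]
  have hUA : U = A * (U * MM⁻¹) := by
    rw [hAU]
    symm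
    calc U * MM * U.transpose * (U * MM⁻¹)
        = U * (MM * ((U.transpose * U) * MM⁻¹)) := by
          simp only [Matrix.mul_assoc]
      _ = U := by rw [hU, Matrix.one_mul, hMMinv, Matrix.mul_one]
  have hrange : LinearMap.range (Matrix.toLin' A) = LinearMap.range (Matrix.toLin' U) := by
    apply le_antisymm
    · conv_lhs => rw [hAU1]
      rw [Matrix.toLin'_mul]
      exact LinearMap.range_comp_le_range _ _
    · conv_lhs => rw [hUA]
      rw [Matrix.toLin'_mul]
      exact LinearMap.range_comp_le_range _ _
  have hU'inj : Function.Injective (Matrix.toLin' U) := by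
    intro a b hab
    have hab' : U *ᵥ a = U *ᵥ b := by
      rw [← Matrix.toLin'_apply, ← Matrix.toLin'_apply, hab]
    have h2 : Matrix.toEuclideanLin U ((WithLp.equiv 2 (Fin r → ℝ)).symm a)
        = Matrix.toEuclideanLin U ((WithLp.equiv 2 (Fin r → ℝ)).symm b) := by
      rw [WithLp.equiv_symm_apply, Matrix.toEuclideanLin_apply_piLp_toLp, Matrix.toEuclideanLin_apply_piLp_toLp,
        hab']
    have h3 := tel_inj U hU h2
    exact (WithLp.equiv 2 (Fin r → ℝ)).symm.injective h3
  have hrank : A.rank = r := by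
    have heq : Matrix.rank A = Module.finrank ℝ (LinearMap.range (Matrix.toLin' A)) := by
      rw [Matrix.rank, Matrix.toLin'_apply']
    rw [heq, hrange, LinearMap.finrank_range_of_inj hU'inj, Module.finrank_fin_fun]
  refine ⟨?_, hrank, hrange⟩
  · have h1 : singVal X r ^ 2 ≤ s j ^ 2 := pow_le_pow_left₀ hXnn hXle 2
    have h2 : (1 - δ) * singVal X r ^ 2 ≤ (1 - δ) * s j ^ 2 :=
      mul_le_mul_of_nonneg_left h1 (by linarith)
    exact le_trans h2 hAge
end
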